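/- Let μ be the Borel probability measure on [0, 1] whose cumulative distribution function is F(t) = (4/π) arctan(√t) for t ∈ [0, 1] (i.e. μ([0, t]) = (4/π) arctan(√t)), and let M(x, y) = (1 + x)(1 + y)(1 − xy)/(1 + xy)² be the Glicksberg–Gross utility kernel on [0, 1]². Then μ is an equalizing strategy with value 4/π: for every y ∈ [0, 1], ∫_0^1 M(x, y) dμ(x) = 4/π. -/

import Mathlib

open MeasureTheory Set Real
open scoped ENNReal NNReal

noncomputable def ggDens (u : ℝ) : ℝ≥0 := Real.toNNReal (4 / π * (1 / (1 + u ^ 2)))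

lemma ggDens_fun_cont : Continuous fun u : ℝ => 4 / π * (1 / (1 + u ^ 2)) :=
  continuous_const.mul (continuous_const.div (by continuity)
    fun u => by positivity)

lemma ggDens_measurable : Measurable ggDens :=
  ggDens_fun_cont.measurable.real_toNNReal

lemma gg_ftc (s : ℝ) : ∫ u in (0:ℝ)..s, 4 / π * (1 / (1 + u ^ 2)) = 4 / π * arctan s := by
  have h : ∀ u ∈ uIcc (0:ℝ) s,
      HasDerivAt (fun v => 4 / π * arctan v) (4 / π * (1 / (1 + u ^ 2))) u :=
    fun u _ => (Real.hasDerivAt_arctan u).const_mul (4 / π)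
  rw [intervalIntegral.integral_eq_sub_of_hasDerivAt h
    (ggDens_fun_cont.intervalIntegrable _ _)]
  simp

noncomputable def ggRho : Measure ℝ :=
  (volume.restrict (Icc 0 1)).withDensity fun u => (ggDens u : ℝ≥0∞)

lemma ggRho_integrableOn :
    IntegrableOn (fun u : ℝ => 4 / π * (1 / (1 + u ^ 2))) (Icc (0:ℝ) 1) :=
  ggDens_fun_cont.integrableOn_Icc

lemma ggRho_apply {A : Set ℝ} (hA : MeasurableSet A) :
    ggRho A = ENNReal.ofReal (∫ u in A ∩ Icc 0 1, 4 / π * (1 / (1 + u ^ 2))) := by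
  have hco : ∀ a : ℝ, (ggDens a : ℝ≥0∞) = ENNReal.ofReal (4 / π * (1 / (1 + a ^ 2))) :=
    fun a => rfl
  rw [ggRho, withDensity_apply _ hA, Measure.restrict_restrict hA]
  simp only [hco]
  rw [← ofReal_integral_eq_lintegral_ofReal
      (ggRho_integrableOn.mono_set inter_subset_right)
      (Filter.Eventually.of_forall fun u => by positivity)]

noncomputable def ggNu : Measure ℝ := ggRho.map fun u => u ^ 2

lemma gg_sq_measurable : Measurable fun u : ℝ => u ^ 2 := by measurability

lemma ggNu_Iic_of_neg {t : ℝ} (ht : t < 0) : ggNu (Iic t) = 0 := by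
  rw [ggNu, Measure.map_apply gg_sq_measurable measurableSet_Iic]
  have : (fun u : ℝ => u ^ 2) ⁻¹' Iic t = ∅ := by
    ext u
    simp only [mem_preimage, mem_Iic, mem_empty_iff_false, iff_false, not_le]
    nlinarith [sq_nonneg u]
  rw [this, measure_empty]

lemma ggNu_Iic_of_nonneg {t : ℝ} (ht : 0 ≤ t) :
    ggNu (Iic t) = ENNReal.ofReal (4 / π * arctan (Real.sqrt (min t 1))) := by
  rw [ggNu, Measure.map_apply gg_sq_measurable measurableSet_Iic,
    ggRho_apply ((gg_sq_measurable) measurableSet_Iic)]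
  have hmin : (0:ℝ) ≤ min t 1 := le_min ht zero_le_one
  have hs1 : Real.sqrt (min t 1) ≤ 1 := by
    exact Real.sqrt_le_one.mpr (min_le_right _ _)
  have hset : (fun u : ℝ => u ^ 2) ⁻¹' Iic t ∩ Icc 0 1 = Icc 0 (Real.sqrt (min t 1)) := by
    ext u
    simp only [mem_inter_iff, mem_preimage, mem_Iic, mem_Icc]
    constructor
    · rintro ⟨hut, hu0, hu1⟩
      refine ⟨hu0, (Real.le_sqrt hu0 hmin).2 (le_min hut (by nlinarith))⟩
    · rintro ⟨hu0, hus⟩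
      have h2 : u ^ 2 ≤ min t 1 := (Real.le_sqrt hu0 hmin).1 hus
      exact ⟨h2.trans (min_le_left _ _), hu0, hus.trans hs1⟩
  rw [hset, integral_Icc_eq_integral_Ioc,
    ← intervalIntegral.integral_of_le (Real.sqrt_nonneg _), gg_ftc]

/-- The measure `μ` on `[0,1]` with CDF `F(t) = (4/π) arctan √t` is an
equalizing strategy of the Glicksberg–Gross game with value `4/π`: for every `y ∈ [0,1]`,
`∫ M(x,y) dμ(x) = 4/π`, where `M(x,y) = (1+x)(1+y)(1-xy)/(1+xy)²`. -/
theorem glicksberg_gross_equalizing_strategy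
    (μ : Measure ℝ) [IsProbabilityMeasure μ]
    (hcdf : ∀ t ∈ Icc (0:ℝ) 1,
      μ (Iic t) = ENNReal.ofReal (4 / π * arctan (Real.sqrt t))) :
    ∀ y ∈ Icc (0:ℝ) 1,
      ∫ x, (1 + x) * (1 + y) * (1 - x * y) / (1 + x * y)^2 ∂μ = 4 / π := by
  have hpi : (π:ℝ) ≠ 0 := Real.pi_ne_zero
  -- μ (Iic 1) = 1
  have hone : μ (Iic 1) = 1 := by
    rw [hcdf 1 ⟨zero_le_one, le_refl 1⟩]
    rw [Real.sqrt_one, Real.arctan_one]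
    rw [show 4 / π * (π / 4) = 1 by field_simp]
    exact ENNReal.ofReal_one
  -- μ = ggNu
  have hμν : μ = ggNu := by
    apply Measure.ext_of_Iic μ ggNu
    intro t
    rcases lt_or_ge t 0 with ht | ht
    · rw [ggNu_Iic_of_neg ht]
      have h0 : μ (Iic (0:ℝ)) = 0 := by
        rw [hcdf 0 ⟨le_refl 0, zero_le_one⟩]
        simp
      exact le_antisymm (h0 ▸ measure_mono (Iic_subset_Iic.2 ht.le)) zero_le
    · rw [ggNu_Iic_of_nonneg ht]
      rcases le_or_gt t 1 with ht1 | ht1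
      · rw [min_eq_left ht1]
        exact hcdf t ⟨ht, ht1⟩
      · rw [min_eq_right ht1.le, Real.sqrt_one, Real.arctan_one,
          show 4 / π * (π / 4) = 1 by field_simp, ENNReal.ofReal_one]
        refine le_antisymm ?_ ?_
        · calc μ (Iic t) ≤ μ univ := measure_mono (subset_univ _)
            _ = 1 := measure_univ
        · exact hone ▸ measure_mono (Iic_subset_Iic.2 ht1.le)
  intro y hy
  rw [hμν]
  -- push forward
  have hmf : Measurable fun x : ℝ => (1 + x) * (1 + y) * (1 - x * y) / (1 + x * y) ^ 2 := by
    fun_prop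
  rw [ggNu, integral_map gg_sq_measurable.aemeasurable hmf.aestronglyMeasurable]
  rw [ggRho, integral_withDensity_eq_integral_smul ggDens_measurable]
  -- positivity facts
  have hy0 : (0:ℝ) ≤ y := hy.1
  have hden : ∀ u : ℝ, 0 < 1 + y * u ^ 2 := by
    intro u
    have : 0 ≤ y * u ^ 2 := mul_nonneg hy0 (sq_nonneg u)
    linarith
  -- rewrite the integrand
  have hint : ∀ u : ℝ, ggDens u •
        ((1 + u ^ 2) * (1 + y) * (1 - u ^ 2 * y) / (1 + u ^ 2 * y) ^ 2)
      = 4 / π * (1 + y) * ((1 - y * u ^ 2) / (1 + y * u ^ 2) ^ 2) := by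
    intro u
    rw [NNReal.smul_def, smul_eq_mul, ggDens,
      Real.coe_toNNReal _ (by positivity : (0:ℝ) ≤ 4 / π * (1 / (1 + u ^ 2)))]
    have h1 : (1:ℝ) + u ^ 2 ≠ 0 := by positivity
    have h2 : (1:ℝ) + u ^ 2 * y ≠ 0 := by
      have := hden u; intro h; rw [mul_comm (u^2) y] at h; linarith
    have h3 : (1:ℝ) + y * u ^ 2 ≠ 0 := (hden u).ne'
    field_simp
  simp only [hint]
  rw [integral_Icc_eq_integral_Ioc, ← intervalIntegral.integral_of_le zero_le_one]
  -- FTC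
  have hd : ∀ u ∈ uIcc (0:ℝ) 1,
      HasDerivAt (fun v => 4 / π * (1 + y) * (v / (1 + y * v ^ 2)))
        (4 / π * (1 + y) * ((1 - y * u ^ 2) / (1 + y * u ^ 2) ^ 2)) u := by
    intro u _
    have hne : (1:ℝ) + y * u ^ 2 ≠ 0 := (hden u).ne'
    have hq := (hasDerivAt_id' (x := u)).div
        ((hasDerivAt_const u (1:ℝ)).add ((hasDerivAt_pow 2 u).const_mul y)) hne
    have h := hq.const_mul (4 / π * (1 + y))
    refine h.congr_deriv ?_
    simp only [Pi.add_apply]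
    push_cast
    field_simp
    ring
  have hcont : Continuous fun u : ℝ =>
      4 / π * (1 + y) * ((1 - y * u ^ 2) / (1 + y * u ^ 2) ^ 2) :=
    continuous_const.mul ((by continuity : Continuous fun u : ℝ => 1 - y * u ^ 2).div
      (by continuity) fun u => by positivity)
  rw [intervalIntegral.integral_eq_sub_of_hasDerivAt hd (hcont.intervalIntegrable _ _)]
  have h1y : (1:ℝ) + y ≠ 0 := by linarith
  simp only [one_pow, mul_one]
  field_simp
  ring
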